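/- Let E be a finite-dimensional real normed vector space with geometric structure B, let F, G : E → ℝ be differentiable at p, let uL and uR be a left-gradient and a right-gradient of F at p, and let vL be a left-gradient of G at p. Then the symmetric b-bracket satisfies (1/2) * (B p vL uL + B p uL vL) = fderiv ℝ G p ((1/2) • (uL + uR)); that is, the left (equivalently, right) Leibniz vector field of F for the symmetric b-bracket evaluated on G at p equals the directional derivative of G at p along (1/2)(∇^L F + ∇^R F)(p). -/
import Mathlib

/-- The Leibniz vector field of `F` for the symmetric b-bracket is
`(1/2)(∇^L F + ∇^R F)`: evaluated on `G` at `p`, the symmetric b-bracket equals the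
directional derivative of `G` along `(1/2)(uL + uR)`. -/
theorem symBracket_leibniz_vectorField
    {E : Type*} [NormedAddCommGroup E] [NormedSpace ℝ E] [FiniteDimensional ℝ E]
    (B : E → (E →ₗ[ℝ] E →ₗ[ℝ] ℝ))
    (hB1 : ∀ x v, (∀ w, B x v w = 0) → v = 0)
    (hB2 : ∀ x w, (∀ v, B x v w = 0) → w = 0)
    (F G : E → ℝ) (p : E)
    (hF : DifferentiableAt ℝ F p) (hG : DifferentiableAt ℝ G p)
    (uL uR vL : E)
    (huL : ∀ w, B p uL w = fderiv ℝ F p w)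
    (huR : ∀ w, B p w uR = fderiv ℝ F p w)
    (hvL : ∀ w, B p vL w = fderiv ℝ G p w) :
    (1/2 : ℝ) * (B p vL uL + B p uL vL) = fderiv ℝ G p ((1/2 : ℝ) • (uL + uR)) := by
  have h1 : B p uL vL = fderiv ℝ G p uR := by
    rw [huL vL, ← huR vL, hvL uR]
  rw [hvL uL, h1, map_smul, map_add, smul_eq_mul]
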